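/- For every integer m ≥ 2, the nontrivial ordinary numerical semigroup Λ = {0} ∪ {n ∈ ℕ : n ≥ m} has exactly C(m,3) + 3m + 1 great-grandchildren if m ∈ {2, 3}, and exactly C(m,3) + 3m + 3 great-grandchildren if m ≥ 4, where C(m,3) = m(m−1)(m−2)/6. -/
import Mathlib


/-- A numerical semigroup: a cofinite submonoid of ℕ, viewed as a set of naturals. -/
def IsNumericalSemigroup (S : Set ℕ) : Prop :=
  0 ∈ S ∧ (∀ a ∈ S, ∀ b ∈ S, a + b ∈ S) ∧ ∃ N : ℕ, ∀ n : ℕ, N ≤ n → n ∈ S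

/-- The conductor: the smallest `N` such that every `n ≥ N` belongs to `S`. -/
noncomputable def sgConductor (S : Set ℕ) : ℕ :=
  sInf {N : ℕ | ∀ n : ℕ, N ≤ n → n ∈ S}

/-- The genus: the number of gaps. -/
noncomputable def sgGenus (S : Set ℕ) : ℕ :=
  Sᶜ.ncard

/-- The rank `k(Λ) = c(Λ) - g(Λ)`. -/
noncomputable def sgRank (S : Set ℕ) : ℕ :=
  sgConductor S - sgGenus S

/-- The multiplicity: the smallest nonzero element. -/
noncomputable def sgMultiplicity (S : Set ℕ) : ℕ :=
  sInf {n : ℕ | n ∈ S ∧ n ≠ 0}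

/-- The Frobenius number: the largest gap, i.e. the conductor minus one. -/
noncomputable def sgFrobenius (S : Set ℕ) : ℕ :=
  sgConductor S - 1

/-- `sgElem S j` is the element `λ_j` of `S = {λ_0 = 0 < λ_1 < λ_2 < ⋯}`. -/
noncomputable def sgElem (S : Set ℕ) (j : ℕ) : ℕ :=
  Nat.nth (· ∈ S) j

/-- The jump `u_j = λ_{j+1} - λ_j`. -/
noncomputable def sgJump (S : Set ℕ) (j : ℕ) : ℕ :=
  sgElem S (j + 1) - sgElem S j

/-- The left elements: elements of `S` smaller than the Frobenius number. -/
def sgLeftElements (S : Set ℕ) : Set ℕ :=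
  {x : ℕ | x ∈ S ∧ x + 1 < sgConductor S}

/-- A minimal generator: a nonzero element not the sum of two nonzero elements. -/
def IsMinimalGenerator (S : Set ℕ) (x : ℕ) : Prop :=
  x ∈ S ∧ x ≠ 0 ∧ ¬ ∃ a ∈ S, ∃ b ∈ S, a ≠ 0 ∧ b ≠ 0 ∧ a + b = x

/-- A right generator: a minimal generator larger than the Frobenius number. -/
def IsRightGenerator (S : Set ℕ) (x : ℕ) : Prop :=
  IsMinimalGenerator S x ∧ sgFrobenius S < x

/-- A strong generator: a right generator `μ` such that `μ + m(Λ)` is a minimal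
generator of `Λ ∖ {μ}`. -/
noncomputable def IsStrongGenerator (S : Set ℕ) (x : ℕ) : Prop :=
  IsRightGenerator S x ∧ IsMinimalGenerator (S \ {x}) (x + sgMultiplicity S)

/-- A new generator of `Λ`: a minimal generator of `Λ` that is not a minimal
generator of `Λ ∪ {F(Λ)}`. -/
noncomputable def IsNewGenerator (S : Set ℕ) (x : ℕ) : Prop :=
  IsMinimalGenerator S x ∧ ¬ IsMinimalGenerator (S ∪ {sgFrobenius S}) x

/-- `x` (an element `λ_s ≥ c(Λ)`) is an order-`p` seed of `Λ` if
`x + λ_p ≠ λ_i + λ_j` for all `p < i ≤ j < s`, i.e. for all `i ≤ j` with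
`p < i` and `λ_j < x`. -/
noncomputable def IsSeed (S : Set ℕ) (p x : ℕ) : Prop :=
  sgConductor S ≤ x ∧ ∀ i j : ℕ, p < i → i ≤ j → sgElem S j < x →
    x + sgElem S p ≠ sgElem S i + sgElem S j

/-- `T` is a child of `S`: obtained by removing one right generator. -/
def IsChild (T S : Set ℕ) : Prop :=
  ∃ μ : ℕ, IsRightGenerator S μ ∧ T = S \ {μ}

/-- A grandchild: a child of a child. -/
def IsGrandchild (T S : Set ℕ) : Prop :=
  ∃ C : Set ℕ, IsChild C S ∧ IsChild T C

/-- A great-grandchild: a child of a grandchild. -/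
def IsGreatGrandchild (T S : Set ℕ) : Prop :=
  ∃ C : Set ℕ, IsGrandchild C S ∧ IsChild T C

/-- `⟨a,b,c,…⟩|_κ`: the smallest numerical semigroup containing a given set. -/
def sgClosure (A : Set ℕ) : Set ℕ :=
  ⋂₀ {S : Set ℕ | IsNumericalSemigroup S ∧ A ⊆ S}


-- development
def ordSg (m : ℕ) : Set ℕ := ({0} : Set ℕ) ∪ {n : ℕ | m ≤ n}

lemma mem_ordSg {m x : ℕ} : x ∈ ordSg m ↔ x = 0 ∨ m ≤ x := by
  simp [ordSg]

lemma mem_ordSg_diff {m x : ℕ} {G : Set ℕ} :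
    x ∈ ordSg m \ G ↔ (x = 0 ∨ m ≤ x) ∧ x ∉ G := by
  simp [ordSg, Set.mem_diff]

lemma conductor_ordSg_diff {m : ℕ} (hm : 1 ≤ m) (G : Set ℕ) (g : ℕ)
    (hg : g ∈ G) (hgm : m ≤ g) (hmax : ∀ x ∈ G, x ≤ g) :
    sgConductor (ordSg m \ G) = g + 1 := by
  have h1 : (g + 1) ∈ {N : ℕ | ∀ n : ℕ, N ≤ n → n ∈ ordSg m \ G} := by
    intro n hn
    rw [mem_ordSg_diff]
    constructor
    · right; omega
    · intro hnG; have := hmax n hnG; omega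
  apply le_antisymm (Nat.sInf_le h1)
  apply le_csInf ⟨_, h1⟩
  intro N hN
  by_contra hc
  have : g ∈ ordSg m \ G := hN g (by omega)
  exact this.2 hg

lemma conductor_ordSg {m : ℕ} (hm : 2 ≤ m) : sgConductor (ordSg m) = m := by
  have h1 : m ∈ {N : ℕ | ∀ n : ℕ, N ≤ n → n ∈ ordSg m} := by
    intro n hn; exact Or.inr hn
  apply le_antisymm (Nat.sInf_le h1)
  apply le_csInf ⟨_, h1⟩
  intro N hN
  by_contra hc
  have : (m-1) ∈ ordSg m := hN (m-1) (by omega)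
  rw [mem_ordSg] at this
  omega

lemma frobenius_ordSg_diff {m : ℕ} (hm : 1 ≤ m) (G : Set ℕ) (g : ℕ)
    (hg : g ∈ G) (hgm : m ≤ g) (hmax : ∀ x ∈ G, x ≤ g) :
    sgFrobenius (ordSg m \ G) = g := by
  rw [sgFrobenius, conductor_ordSg_diff hm G g hg hgm hmax]; omega

lemma minGen_ordSg_diff {m : ℕ} (hm : 2 ≤ m) (G : Set ℕ) (x : ℕ)
    (hx : m ≤ x) (hxG : x ∉ G) :
    IsMinimalGenerator (ordSg m \ G) x ↔
      ∀ p : ℕ, m ≤ p → p + m ≤ x → p ∈ G ∨ x - p ∈ G := by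
  constructor
  · rintro ⟨-, -, hns⟩ p hp1 hp2
    by_contra hc
    push_neg at hc
    exact hns ⟨p, mem_ordSg_diff.2 ⟨Or.inr hp1, hc.1⟩, x - p,
      mem_ordSg_diff.2 ⟨Or.inr (by omega), hc.2⟩, by omega, by omega, by omega⟩
  · intro h
    refine ⟨mem_ordSg_diff.2 ⟨Or.inr hx, hxG⟩, by omega, ?_⟩
    rintro ⟨a, ha, b, hb, ha0, hb0, hab⟩
    rw [mem_ordSg_diff] at ha hb
    have hma : m ≤ a := by rcases ha.1 with h | h; omega; exact h
    have hmb : m ≤ b := by rcases hb.1 with h | h; omega; exact h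
    rcases h a hma (by omega) with h' | h'
    · exact ha.2 h'
    · have : x - a = b := by omega
      rw [this] at h'; exact hb.2 h'

/-- The decidable triple condition. -/
def Trip (m a b c : ℕ) : Prop :=
  m ≤ a ∧ a < 2*m ∧ a < b ∧
  (∀ p, p < b → m ≤ p → p + m ≤ b → p = a ∨ b - p = a) ∧ b < c ∧
  (∀ p, p < c → m ≤ p → p + m ≤ c → p = a ∨ p = b ∨ c - p = a ∨ c - p = b)

instance (m a b c : ℕ) : Decidable (Trip m a b c) := by
  unfold Trip; infer_instance

lemma isChild_ordSg {m : ℕ} (hm : 2 ≤ m) (T : Set ℕ) :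
    IsChild T (ordSg m) ↔ ∃ a, (m ≤ a ∧ a < 2*m) ∧ T = ordSg m \ {a} := by
  have hfrob : sgFrobenius (ordSg m) = m - 1 := by
    rw [sgFrobenius, conductor_ordSg hm]
  constructor
  · rintro ⟨a, ⟨⟨haS, ha0, hns⟩, hfa⟩, rfl⟩
    rw [hfrob] at hfa
    rw [mem_ordSg] at haS
    have hma : m ≤ a := by omega
    refine ⟨a, ⟨hma, ?_⟩, rfl⟩
    by_contra hc
    exact hns ⟨m, mem_ordSg.2 (Or.inr le_rfl), a - m, mem_ordSg.2 (Or.inr (by omega)),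
      by omega, by omega, by omega⟩
  · rintro ⟨a, ⟨h1, h2⟩, rfl⟩
    refine ⟨a, ⟨⟨Or.inr h1, by omega, ?_⟩, by rw [hfrob]; omega⟩, rfl⟩
    rintro ⟨p, hp, q, hq, hp0, hq0, hpq⟩
    rw [mem_ordSg] at hp hq
    omega

lemma isRightGen_level1 {m : ℕ} (hm : 2 ≤ m) {a x : ℕ} (ha : m ≤ a) (ha2 : a < 2*m)
    (hax : a < x) :
    IsRightGenerator (ordSg m \ {a}) x ↔
      ∀ p, m ≤ p → p + m ≤ x → p = a ∨ x - p = a := by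
  have hfrob : sgFrobenius (ordSg m \ {a}) = a :=
    frobenius_ordSg_diff (by omega) {a} a rfl ha (by simp)
  rw [IsRightGenerator, hfrob,
    minGen_ordSg_diff hm {a} x (by omega) (by simp; omega)]
  constructor
  · rintro ⟨h, -⟩ p hp1 hp2; simpa using h p hp1 hp2
  · intro h; exact ⟨fun p hp1 hp2 => by simpa using h p hp1 hp2, hax⟩

lemma isRightGen_level2 {m : ℕ} (hm : 2 ≤ m) {a b x : ℕ} (ha : m ≤ a) (hab : a < b)
    (hbx : b < x) :
    IsRightGenerator (ordSg m \ {a, b}) x ↔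
      ∀ p, m ≤ p → p + m ≤ x → p = a ∨ p = b ∨ x - p = a ∨ x - p = b := by
  have hfrob : sgFrobenius (ordSg m \ {a, b}) = b :=
    frobenius_ordSg_diff (by omega) {a, b} b (by simp) (by omega)
      (by intro y hy; simp at hy; omega)
  rw [IsRightGenerator, hfrob,
    minGen_ordSg_diff hm {a, b} x (by omega) (by simp; omega)]
  constructor
  · rintro ⟨h, -⟩ p hp1 hp2
    have := h p hp1 hp2
    simp only [Set.mem_insert_iff, Set.mem_singleton_iff] at this
    tauto
  · intro h
    refine ⟨fun p hp1 hp2 => ?_, hbx⟩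
    have := h p hp1 hp2
    simp only [Set.mem_insert_iff, Set.mem_singleton_iff]
    tauto

lemma pair_union_singleton (a b c : ℕ) : ({a, b} : Set ℕ) ∪ {c} = {a, b, c} := by
  ext x; simp; tauto

lemma isGGC_ordSg {m : ℕ} (hm : 2 ≤ m) (T : Set ℕ) :
    IsGreatGrandchild T (ordSg m) ↔
      ∃ a b c : ℕ, Trip m a b c ∧ T = ordSg m \ {a, b, c} := by
  constructor
  · rintro ⟨C2, ⟨C1, hC1, hC2⟩, hT⟩
    obtain ⟨a, ⟨ha1, ha2⟩, rfl⟩ := (isChild_ordSg hm C1).1 hC1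
    obtain ⟨b, hbr, rfl⟩ := hC2
    have hab : a < b := by
      have := hbr.2
      rwa [frobenius_ordSg_diff (by omega) {a} a rfl ha1 (by simp)] at this
    have hQb := (isRightGen_level1 hm ha1 ha2 hab).1 hbr
    obtain ⟨c, hcr, rfl⟩ := hT
    have hset : (ordSg m \ {a}) \ {b} = ordSg m \ {a, b} := by
      rw [Set.diff_diff, Set.singleton_union]
    rw [hset] at hcr ⊢
    have hbc : b < c := by
      have := hcr.2
      rwa [frobenius_ordSg_diff (by omega) {a, b} b (by simp) (by omega)
        (by intro y hy; simp at hy; omega)] at this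
    have hQc := (isRightGen_level2 hm ha1 hab hbc).1 hcr
    refine ⟨a, b, c, ⟨ha1, ha2, hab, fun p _ h1 h2 => hQb p h1 h2, hbc,
      fun p _ h1 h2 => hQc p h1 h2⟩, ?_⟩
    rw [Set.diff_diff, pair_union_singleton]
  · rintro ⟨a, b, c, ⟨ha1, ha2, hab, hQb, hbc, hQc⟩, rfl⟩
    have hset1 : (ordSg m \ {a}) \ {b} = ordSg m \ {a, b} := by
      rw [Set.diff_diff, Set.singleton_union]
    have hset2 : (ordSg m \ {a, b}) \ {c} = ordSg m \ {a, b, c} := by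
      rw [Set.diff_diff, pair_union_singleton]
    refine ⟨ordSg m \ {a, b}, ⟨ordSg m \ {a}, (isChild_ordSg hm _).2 ⟨a, ⟨ha1, ha2⟩, rfl⟩,
      ⟨b, (isRightGen_level1 hm ha1 ha2 hab).2
        (fun p h1 h2 => hQb p (by omega) h1 h2), hset1.symm⟩⟩,
      ⟨c, (isRightGen_level2 hm ha1 hab hbc).2
        (fun p h1 h2 => hQc p (by omega) h1 h2), hset2.symm⟩⟩

lemma trip_bound {m a b c : ℕ} (hm : 2 ≤ m) (h : Trip m a b c) : c < 2*m+4 := by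
  obtain ⟨ha1, ha2, hab, hQb, hbc, hQc⟩ := h
  by_contra hcon
  have h0 := hQc m (by omega) (by omega) (by omega)
  have h1 := hQc (m+1) (by omega) (by omega) (by omega)
  have h2 := hQc (m+2) (by omega) (by omega) (by omega)
  have h3 := hQc (m+3) (by omega) (by omega) (by omega)
  have h4 := hQc (m+4) (by omega) (by omega) (by omega)
  omega

def tripFinset (m : ℕ) : Finset (ℕ × ℕ × ℕ) :=
  ((Finset.range (2*m+4)) ×ˢ (Finset.range (2*m+4)) ×ˢ (Finset.range (2*m+4))).filter
    (fun t => Trip m t.1 t.2.1 t.2.2)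

lemma mem_tripFinset {m : ℕ} (hm : 2 ≤ m) (t : ℕ × ℕ × ℕ) :
    t ∈ tripFinset m ↔ Trip m t.1 t.2.1 t.2.2 := by
  rw [tripFinset, Finset.mem_filter]
  constructor
  · exact fun h => h.2
  · intro h
    have hc := trip_bound hm h
    obtain ⟨h1, h2, h3, h4, h5, h6⟩ := h
    refine ⟨?_, ⟨h1, h2, h3, h4, h5, h6⟩⟩
    rw [Finset.mem_product, Finset.mem_product]
    refine ⟨Finset.mem_range.2 (by omega), Finset.mem_range.2 (by omega),
      Finset.mem_range.2 (by omega)⟩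

lemma eq_triples {m a b c a' b' c' : ℕ} (ha : m ≤ a) (hb : a < b) (hc : b < c)
    (ha' : m ≤ a') (hb' : a' < b') (hc' : b' < c')
    (h : ordSg m \ {a, b, c} = ordSg m \ {a', b', c'}) :
    a = a' ∧ b = b' ∧ c = c' := by
  have key : ∀ x, m ≤ x → (x ∈ ({a, b, c} : Set ℕ) → x ∈ ({a', b', c'} : Set ℕ)) := by
    intro x hx hmem
    by_contra hc2
    have hx2 : x ∈ ordSg m \ {a', b', c'} := ⟨mem_ordSg.2 (Or.inr hx), hc2⟩
    rw [← h] at hx2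
    exact hx2.2 hmem
  have key' : ∀ x, m ≤ x → (x ∈ ({a', b', c'} : Set ℕ) → x ∈ ({a, b, c} : Set ℕ)) := by
    intro x hx hmem
    by_contra hc2
    have hx2 : x ∈ ordSg m \ {a, b, c} := ⟨mem_ordSg.2 (Or.inr hx), hc2⟩
    rw [h] at hx2
    exact hx2.2 hmem
  have k1 := key a ha (by simp)
  have k2 := key b (by omega) (by simp)
  have k3 := key c (by omega) (by simp)
  have k4 := key' a' ha' (by simp)
  have k5 := key' b' (by omega) (by simp)
  have k6 := key' c' (by omega) (by simp)
  simp only [Set.mem_insert_iff, Set.mem_singleton_iff] at k1 k2 k3 k4 k5 k6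
  omega

lemma ggc_ncard {m : ℕ} (hm : 2 ≤ m) :
    {T : Set ℕ | IsGreatGrandchild T (ordSg m)}.ncard = (tripFinset m).card := by
  have himg : {T : Set ℕ | IsGreatGrandchild T (ordSg m)} =
      (fun t : ℕ × ℕ × ℕ => ordSg m \ {t.1, t.2.1, t.2.2}) '' ↑(tripFinset m) := by
    ext T
    simp only [Set.mem_setOf_eq, isGGC_ordSg hm, Set.mem_image, Finset.mem_coe]
    constructor
    · rintro ⟨a, b, c, ht, rfl⟩
      exact ⟨(a, b, c), (mem_tripFinset hm _).2 ht, rfl⟩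
    · rintro ⟨⟨a, b, c⟩, ht, rfl⟩
      exact ⟨a, b, c, (mem_tripFinset hm _).1 ht, rfl⟩
  rw [himg, Set.ncard_image_of_injOn, Set.ncard_coe_finset]
  rintro ⟨a, b, c⟩ ht ⟨a', b', c'⟩ ht' h
  rw [Finset.mem_coe, mem_tripFinset hm] at ht ht'
  dsimp only at ht ht' h
  obtain ⟨h1, -, h3, -, h5, -⟩ := ht
  obtain ⟨h1', -, h3', -, h5', -⟩ := ht'
  have := eq_triples h1 h3 h5 h1' h3' h5' h
  simp only [Prod.mk.injEq]
  omega

def spFinset (n : ℕ) : Finset (ℕ × ℕ) :=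
  ((Finset.range n) ×ˢ (Finset.range n)).filter (fun t => t.1 < t.2)

def stFinset (n : ℕ) : Finset (ℕ × ℕ × ℕ) :=
  ((Finset.range n) ×ˢ (Finset.range n) ×ˢ (Finset.range n)).filter
    (fun t => t.1 < t.2.1 ∧ t.2.1 < t.2.2)

lemma mem_spFinset {n : ℕ} {t : ℕ × ℕ} : t ∈ spFinset n ↔ t.1 < t.2 ∧ t.2 < n := by
  rcases t with ⟨a, b⟩
  simp [spFinset, Finset.mem_filter, Finset.mem_product]
  omega

lemma mem_stFinset {n : ℕ} {t : ℕ × ℕ × ℕ} :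
    t ∈ stFinset n ↔ t.1 < t.2.1 ∧ t.2.1 < t.2.2 ∧ t.2.2 < n := by
  rcases t with ⟨a, b, c⟩
  simp [stFinset, Finset.mem_filter, Finset.mem_product]
  omega

lemma spFinset_succ (n : ℕ) :
    spFinset (n + 1) = spFinset n ∪ (Finset.range n).image (fun a => (a, n)) := by
  ext ⟨a, b⟩
  simp only [mem_spFinset, Finset.mem_union, Finset.mem_image, Finset.mem_range, Prod.mk.injEq]
  constructor
  · rintro ⟨h1, h2⟩
    rcases Nat.lt_succ_iff_lt_or_eq.1 h2 with h | rfl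
    · exact Or.inl ⟨h1, h⟩
    · exact Or.inr ⟨a, h1, rfl, rfl⟩
  · rintro (⟨h1, h2⟩ | ⟨x, hx, rfl, rfl⟩)
    · exact ⟨h1, by omega⟩
    · exact ⟨hx, by omega⟩

lemma spFinset_card (n : ℕ) : (spFinset n).card = n.choose 2 := by
  induction n with
  | zero => decide
  | succ n ih =>
    rw [spFinset_succ, Finset.card_union_of_disjoint, ih,
      Finset.card_image_of_injective _ (fun x y h => by simpa using (Prod.mk.injEq _ _ _ _ ▸ h).1),
      Finset.card_range]
    · rw [Nat.choose_succ_succ]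
      simp [Nat.choose_one_right]
      omega
    · rw [Finset.disjoint_left]
      rintro ⟨a, b⟩ h1 h2
      rw [mem_spFinset] at h1
      simp [Prod.ext_iff] at h2
      omega

lemma stFinset_succ (n : ℕ) :
    stFinset (n + 1) = stFinset n ∪ (spFinset n).image (fun p => (p.1, p.2, n)) := by
  ext ⟨a, b, c⟩
  simp only [mem_stFinset, Finset.mem_union, Finset.mem_image, mem_spFinset, Prod.mk.injEq]
  constructor
  · rintro ⟨h1, h2, h3⟩
    rcases Nat.lt_succ_iff_lt_or_eq.1 h3 with h | rfl
    · exact Or.inl ⟨h1, h2, h⟩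
    · exact Or.inr ⟨(a, b), ⟨h1, h2⟩, rfl, rfl, rfl⟩
  · rintro (⟨h1, h2, h3⟩ | ⟨⟨x, y⟩, ⟨hx, hy⟩, rfl, rfl, rfl⟩)
    · exact ⟨h1, h2, by omega⟩
    · exact ⟨hx, hy, by omega⟩

lemma stFinset_card (n : ℕ) : (stFinset n).card = n.choose 3 := by
  induction n with
  | zero => decide
  | succ n ih =>
    rw [stFinset_succ, Finset.card_union_of_disjoint, ih,
      Finset.card_image_of_injective _
        (fun x y h => by
          rcases x with ⟨x1, x2⟩; rcases y with ⟨y1, y2⟩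
          simpa [Prod.ext_iff] using h),
      spFinset_card]
    · have h3 : Nat.succ 2 = 3 := rfl
      rw [Nat.choose_succ_succ n 2, h3]
      omega
    · rw [Finset.disjoint_left]
      rintro ⟨a, b, c⟩ h1 h2
      simp only [Finset.mem_image, Prod.mk.injEq] at h2
      obtain ⟨⟨x, y⟩, -, rfl, rfl, rfl⟩ := h2
      rw [mem_stFinset] at h1
      dsimp only at h1
      omega

def P1 (m : ℕ) : Finset (ℕ × ℕ × ℕ) :=
  (stFinset m).image (fun t => (t.1 + m, t.2.1 + m, t.2.2 + m))
def P2 (m : ℕ) : Finset (ℕ × ℕ × ℕ) :=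
  (Finset.Icc (m+1) (2*m-1)).image (fun b => (m, b, 2*m))
def P3 (m : ℕ) : Finset (ℕ × ℕ × ℕ) :=
  (Finset.Icc (m+1) (2*m)).image (fun b => (m, b, 2*m+1))
def P4 (m : ℕ) : Finset (ℕ × ℕ × ℕ) :=
  (Finset.Icc (m+2) (2*m-1)).image (fun b => (m+1, b, 2*m+1))
def P5 (m : ℕ) : Finset (ℕ × ℕ × ℕ) :=
  {(m, m+1, 2*m+2), (m+1, m+2, 2*m+2), (m, m+1, 2*m+3), (m, m+2, 2*m+3),
   (m+1, m+3, 2*m+3), (m+2, m+3, 2*m+3)}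

lemma mem_P1 {m a b c : ℕ} :
    (a, b, c) ∈ P1 m ↔ m ≤ a ∧ a < b ∧ b < c ∧ c < 2*m := by
  constructor
  · rintro h
    simp only [P1, Finset.mem_image, Prod.mk.injEq] at h
    obtain ⟨⟨x, y, z⟩, hst, h1, h2, h3⟩ := h
    rw [mem_stFinset] at hst
    dsimp only at hst h1 h2 h3
    omega
  · rintro ⟨h1, h2, h3, h4⟩
    simp only [P1, Finset.mem_image, Prod.mk.injEq]
    refine ⟨(a - m, b - m, c - m), mem_stFinset.2 (by dsimp only; omega),
      by dsimp only; omega, by dsimp only; omega, by dsimp only; omega⟩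

lemma mem_P2 {m a b c : ℕ} :
    (a, b, c) ∈ P2 m ↔ a = m ∧ m + 1 ≤ b ∧ b ≤ 2*m - 1 ∧ c = 2*m := by
  simp only [P2, Finset.mem_image, Prod.mk.injEq, Finset.mem_Icc]
  constructor
  · rintro ⟨x, hx, rfl, rfl, rfl⟩; omega
  · rintro ⟨rfl, h1, h2, rfl⟩; exact ⟨b, ⟨h1, h2⟩, rfl, rfl, rfl⟩

lemma mem_P3 {m a b c : ℕ} :
    (a, b, c) ∈ P3 m ↔ a = m ∧ m + 1 ≤ b ∧ b ≤ 2*m ∧ c = 2*m+1 := by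
  simp only [P3, Finset.mem_image, Prod.mk.injEq, Finset.mem_Icc]
  constructor
  · rintro ⟨x, hx, rfl, rfl, rfl⟩; omega
  · rintro ⟨rfl, h1, h2, rfl⟩; exact ⟨b, ⟨h1, h2⟩, rfl, rfl, rfl⟩

lemma mem_P4 {m a b c : ℕ} :
    (a, b, c) ∈ P4 m ↔ a = m+1 ∧ m + 2 ≤ b ∧ b ≤ 2*m - 1 ∧ c = 2*m+1 := by
  simp only [P4, Finset.mem_image, Prod.mk.injEq, Finset.mem_Icc]
  constructor
  · rintro ⟨x, hx, rfl, rfl, rfl⟩; omega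
  · rintro ⟨rfl, h1, h2, rfl⟩; exact ⟨b, ⟨h1, h2⟩, rfl, rfl, rfl⟩

lemma mem_P5 {m a b c : ℕ} :
    (a, b, c) ∈ P5 m ↔
      (a = m ∧ b = m+1 ∧ c = 2*m+2) ∨ (a = m+1 ∧ b = m+2 ∧ c = 2*m+2) ∨
      (a = m ∧ b = m+1 ∧ c = 2*m+3) ∨ (a = m ∧ b = m+2 ∧ c = 2*m+3) ∨
      (a = m+1 ∧ b = m+3 ∧ c = 2*m+3) ∨ (a = m+2 ∧ b = m+3 ∧ c = 2*m+3) := by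
  simp only [P5, Finset.mem_insert, Finset.mem_singleton, Prod.mk.injEq]

def Pieces (m : ℕ) : Finset (ℕ × ℕ × ℕ) := (((P1 m ∪ P2 m) ∪ P3 m) ∪ P4 m) ∪ P5 m

set_option maxHeartbeats 1000000 in
lemma trip_iff_pieces {m a b c : ℕ} (hm : 4 ≤ m) :
    Trip m a b c ↔ (a, b, c) ∈ Pieces m := by
  rw [Pieces]
  simp only [Finset.mem_union, mem_P1, mem_P2, mem_P3, mem_P4, mem_P5]
  constructor
  · rintro ⟨h1, h2, h3, hQb, h5, hQc⟩
    have hc4 : c < 2*m + 4 := by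
      by_contra hcon
      have q0 := hQc m (by omega) (by omega) (by omega)
      have q1 := hQc (m+1) (by omega) (by omega) (by omega)
      have q2 := hQc (m+2) (by omega) (by omega) (by omega)
      have q3 := hQc (m+3) (by omega) (by omega) (by omega)
      have q4 := hQc (m+4) (by omega) (by omega) (by omega)
      omega
    by_cases hc1 : c ≤ 2*m - 1
    · exact Or.inl (Or.inl (Or.inl (Or.inl ⟨h1, h3, h5, by omega⟩)))
    rcases (by omega : c = 2*m ∨ c = 2*m+1 ∨ c = 2*m+2 ∨ c = 2*m+3) with hc | hc | hc | hc
    · have q0 := hQc m (by omega) (by omega) (by omega)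
      exact Or.inl (Or.inl (Or.inl (Or.inr ⟨by omega, by omega, by omega, by omega⟩)))
    · have q0 := hQc m (by omega) (by omega) (by omega)
      have q1 := hQc (m+1) (by omega) (by omega) (by omega)
      have ha : a = m ∨ a = m + 1 := by omega
      rcases ha with rfl | rfl
      · exact Or.inl (Or.inl (Or.inr ⟨rfl, by omega, by omega, by omega⟩))
      · have hb : b ≠ 2*m := by
          intro hb
          have := hQb m (by omega) (by omega) (by omega)
          omega
        exact Or.inl (Or.inr ⟨rfl, by omega, by omega, by omega⟩)
    · have q0 := hQc m (by omega) (by omega) (by omega)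
      have q1 := hQc (m+1) (by omega) (by omega) (by omega)
      have q2 := hQc (m+2) (by omega) (by omega) (by omega)
      have hab : (a = m ∧ b = m+1) ∨ (a = m+1 ∧ b = m+2) := by omega
      exact Or.inr (by omega)
    · have q0 := hQc m (by omega) (by omega) (by omega)
      have q1 := hQc (m+1) (by omega) (by omega) (by omega)
      have q2 := hQc (m+2) (by omega) (by omega) (by omega)
      have q3 := hQc (m+3) (by omega) (by omega) (by omega)
      have hab : (a = m ∧ b = m+1) ∨ (a = m ∧ b = m+2) ∨
          (a = m+1 ∧ b = m+3) ∨ (a = m+2 ∧ b = m+3) := by omega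
      exact Or.inr (by omega)
  · intro h
    rcases h with ((((⟨h1, h2, h3, h4⟩ | ⟨rfl, h1, h2, rfl⟩) | ⟨rfl, h1, h2, rfl⟩) |
      ⟨rfl, h1, h2, rfl⟩) | h5)
    · exact ⟨by omega, by omega, by omega, fun p _ u1 u2 => by omega, by omega,
        fun p _ u1 u2 => by omega⟩
    · exact ⟨by omega, by omega, by omega, fun p _ u1 u2 => by omega, by omega,
        fun p _ u1 u2 => by omega⟩
    · exact ⟨by omega, by omega, by omega, fun p _ u1 u2 => by omega, by omega,
        fun p _ u1 u2 => by omega⟩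
    · exact ⟨by omega, by omega, by omega, fun p _ u1 u2 => by omega, by omega,
        fun p _ u1 u2 => by omega⟩
    · exact ⟨by omega, by omega, by omega, fun p _ u1 u2 => by omega, by omega,
        fun p _ u1 u2 => by omega⟩

lemma card_P1 (m : ℕ) : (P1 m).card = m.choose 3 := by
  rw [P1, Finset.card_image_of_injective, stFinset_card]
  rintro ⟨x1, x2, x3⟩ ⟨y1, y2, y3⟩ h
  simp only [Prod.mk.injEq] at h ⊢
  omega

lemma card_P2 (m : ℕ) : (P2 m).card = 2*m - 1 + 1 - (m + 1) := by
  rw [P2, Finset.card_image_of_injective, Nat.card_Icc]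
  rintro x y h
  simpa using h

lemma card_P3 (m : ℕ) : (P3 m).card = 2*m + 1 - (m + 1) := by
  rw [P3, Finset.card_image_of_injective, Nat.card_Icc]
  rintro x y h
  simpa using h

lemma card_P4 (m : ℕ) : (P4 m).card = 2*m - 1 + 1 - (m + 2) := by
  rw [P4, Finset.card_image_of_injective, Nat.card_Icc]
  rintro x y h
  simpa using h

lemma card_P5 {m : ℕ} (hm : 1 ≤ m) : (P5 m).card = 6 := by
  rw [P5]
  rw [Finset.card_insert_of_notMem (by simp [Prod.ext_iff])]
  rw [Finset.card_insert_of_notMem (by simp [Prod.ext_iff])]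
  rw [Finset.card_insert_of_notMem (by simp [Prod.ext_iff])]
  rw [Finset.card_insert_of_notMem (by simp [Prod.ext_iff])]
  rw [Finset.card_insert_of_notMem (by simp [Prod.ext_iff])]
  rw [Finset.card_singleton]

lemma card_Pieces {m : ℕ} (hm : 4 ≤ m) : (Pieces m).card = m.choose 3 + 3*m + 3 := by
  rw [Pieces]
  rw [Finset.card_union_of_disjoint, Finset.card_union_of_disjoint,
    Finset.card_union_of_disjoint, Finset.card_union_of_disjoint,
    card_P1, card_P2, card_P3, card_P4, card_P5 (by omega)]
  · omega
  · rw [Finset.disjoint_left]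
    rintro ⟨a, b, c⟩ h1 h2
    rw [mem_P1] at h1; rw [mem_P2] at h2; omega
  · rw [Finset.disjoint_left]
    rintro ⟨a, b, c⟩ h1 h2
    simp only [Finset.mem_union, mem_P1, mem_P2] at h1
    rw [mem_P3] at h2; omega
  · rw [Finset.disjoint_left]
    rintro ⟨a, b, c⟩ h1 h2
    simp only [Finset.mem_union, mem_P1, mem_P2, mem_P3] at h1
    rw [mem_P4] at h2; omega
  · rw [Finset.disjoint_left]
    rintro ⟨a, b, c⟩ h1 h2
    simp only [Finset.mem_union, mem_P1, mem_P2, mem_P3, mem_P4] at h1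
    rw [mem_P5] at h2; omega

set_option maxRecDepth 100000 in

theorem statement11 (m : ℕ) (hm : 2 ≤ m) :
    ((m = 2 ∨ m = 3) →
      {T : Set ℕ | IsGreatGrandchild T (({0} : Set ℕ) ∪ {n : ℕ | m ≤ n})}.ncard =
        Nat.choose m 3 + 3 * m + 1) ∧
    (4 ≤ m →
      {T : Set ℕ | IsGreatGrandchild T (({0} : Set ℕ) ∪ {n : ℕ | m ≤ n})}.ncard =
        Nat.choose m 3 + 3 * m + 3) := by
  have hset : (({0} : Set ℕ) ∪ {n : ℕ | m ≤ n}) = ordSg m := rfl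
  rw [hset]
  constructor
  · rintro (rfl | rfl)
    · rw [ggc_ncard (by norm_num)]
      decide
    · rw [ggc_ncard (by norm_num)]
      decide
  · intro h4
    rw [ggc_ncard hm]
    have hpieces : tripFinset m = Pieces m := by
      ext ⟨a, b, c⟩
      rw [mem_tripFinset hm]
      dsimp only
      rw [trip_iff_pieces h4]
    rw [hpieces, card_Pieces h4]
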